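/- If mechanism M₁: X → Y is (α,ε₁)-RDP and M₂: X × Y → Z is (α,ε₂)-RDP in its first argument (uniformly over the second), then the composed mechanism M₃(X) = (M₁(X), M₂(X, M₁(X))) is (α, ε₁+ε₂)-RDP. -/

import Mathlib

open MeasureTheory
open scoped ENNReal NNReal ProbabilityTheory

noncomputable section

/-- `(α, ε)`-Rényi-divergence bound between two measures `Pd` and `Q`:
`D_α(Pd‖Q) = (1/(α−1)) log E_Q[(dPd/dQ)^α] ≤ ε`, encoded (for `α > 1`) as
`∫⁻ (dPd/dQ)^α dQ ≤ exp((α−1) ε)`. -/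
def RenyiBound {Y : Type*} [MeasurableSpace Y] (α ε : ℝ) (Pd Q : Measure Y) : Prop :=
  ∫⁻ y, Pd.rnDeriv Q y ^ α ∂Q ≤ ENNReal.ofReal (Real.exp ((α - 1) * ε))

open ProbabilityTheory in
lemma bind_eq_compProd_aux {Y Z : Type*} [MeasurableSpace Y] [MeasurableSpace Z]
    (m : Measure Y) (k : Kernel Y Z) [SFinite m] [IsSFiniteKernel k] :
    (m.bind fun y => (k y).map (Prod.mk y)) = m ⊗ₘ k := by
  have hmeas : Measurable fun y => (k y).map (Prod.mk y) := by
    refine Measure.measurable_of_measurable_coe _ fun t ht => ?_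
    simp_rw [Measure.map_apply measurable_prodMk_left ht]
    exact Kernel.measurable_kernel_prodMk_left ht
  ext s hs
  rw [Measure.bind_apply hs hmeas.aemeasurable, Measure.compProd_apply hs]
  exact lintegral_congr fun y => Measure.map_apply measurable_prodMk_left hs

/-- Adaptive composition of RDP: if `M₁` is `(α,ε₁)`-RDP and `M₂` is
`(α,ε₂)`-RDP in its first argument (uniformly over the auxiliary input), then
the composed mechanism `M₃(X) = (M₁(X), M₂(X, M₁(X)))` is `(α, ε₁+ε₂)`-RDP. -/
theorem rdp_adaptive_composition {X Y Z : Type*} [MeasurableSpace Y] [MeasurableSpace Z]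
    (Neighbor : X → X → Prop)
    (M₁ : X → Measure Y) (M₂ : X → Y → Measure Z)
    (hprob₁ : ∀ x, IsProbabilityMeasure (M₁ x))
    (hprob₂ : ∀ x y, IsProbabilityMeasure (M₂ x y))
    (hmeas₂ : ∀ x, Measurable (M₂ x))
    (α ε₁ ε₂ : ℝ) (hα : 1 < α)
    (hAC₁ : ∀ x x', Neighbor x x' → M₁ x ≪ M₁ x')
    (hAC₂ : ∀ x x' y, Neighbor x x' → M₂ x y ≪ M₂ x' y)
    (hRDP₁ : ∀ x x', Neighbor x x' → RenyiBound α ε₁ (M₁ x) (M₁ x'))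
    (hRDP₂ : ∀ x x' y, Neighbor x x' → RenyiBound α ε₂ (M₂ x y) (M₂ x' y)) :
    ∀ x x', Neighbor x x' →
      RenyiBound α (ε₁ + ε₂)
        ((M₁ x).bind fun y => (M₂ x y).map (Prod.mk y))
        ((M₁ x').bind fun y => (M₂ x' y).map (Prod.mk y)) := by
  classical
  intro x x' hnb
  haveI := hprob₁ x
  haveI := hprob₁ x'
  set μ : Measure Y := M₁ x with hμ
  set ν : Measure Y := M₁ x' with hν
  let κ : ProbabilityTheory.Kernel Y Z := ⟨M₂ x, hmeas₂ x⟩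
  let η : ProbabilityTheory.Kernel Y Z := ⟨M₂ x', hmeas₂ x'⟩
  haveI : ProbabilityTheory.IsMarkovKernel κ := ⟨fun y => hprob₂ x y⟩
  haveI : ProbabilityTheory.IsMarkovKernel η := ⟨fun y => hprob₂ x' y⟩
  set P : Measure (Y × Z) := μ.compProd κ with hP
  set Q : Measure (Y × Z) := ν.compProd η with hQ
  have e1 : ((M₁ x).bind fun y => (M₂ x y).map (Prod.mk y)) = P :=
    bind_eq_compProd_aux μ κ
  have e2 : ((M₁ x').bind fun y => (M₂ x' y).map (Prod.mk y)) = Q :=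
    bind_eq_compProd_aux ν η
  unfold RenyiBound
  rw [e1, e2]
  -- basic numerology
  have hα0 : (0:ℝ) < α := lt_trans zero_lt_one hα
  set pc : ℝ := α / (α - 1) with hpc
  have hc : α.HolderConjugate pc := Real.HolderConjugate.conjExponent hα
  have hpc0 : pc ≠ 0 := hc.symm.ne_zero
  -- main objects
  have hPQ : P ≪ Q :=
    Measure.AbsolutelyContinuous.compProd (hAC₁ x x' hnb)
      (Filter.Eventually.of_forall fun y => hAC₂ x x' y hnb)
  set h : Y × Z → ℝ≥0∞ := P.rnDeriv Q with hh
  have h_meas : Measurable h := Measure.measurable_rnDeriv P Q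
  have hPd : Q.withDensity h = P := Measure.withDensity_rnDeriv_eq P Q hPQ
  set f : Y → ℝ≥0∞ := μ.rnDeriv ν with hf
  have f_meas : Measurable f := Measure.measurable_rnDeriv μ ν
  have hfd : ν.withDensity f = μ := Measure.withDensity_rnDeriv_eq μ ν (hAC₁ x x' hnb)
  set g : Y → Z → ℝ≥0∞ := fun y => (M₂ x y).rnDeriv (M₂ x' y) with hg
  have g_meas : ∀ y, Measurable (g y) := fun y => Measure.measurable_rnDeriv _ _
  have hgd : ∀ y, (η y).withDensity (g y) = κ y := fun y =>
    Measure.withDensity_rnDeriv_eq _ _ (hAC₂ x x' y hnb)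
  set E₁ : ℝ≥0∞ := ENNReal.ofReal (Real.exp ((α - 1) * ε₁)) with hE₁
  set E₂ : ℝ≥0∞ := ENNReal.ofReal (Real.exp ((α - 1) * ε₂)) with hE₂
  have hB1 : ∫⁻ y, f y ^ α ∂ν ≤ E₁ := hRDP₁ x x' hnb
  have hB2 : ∀ y, ∫⁻ z, g y z ^ α ∂(η y) ≤ E₂ := fun y => hRDP₂ x x' y hnb
  -- truncations
  set m : ℕ → Y × Z → ℝ≥0∞ := fun n q => min (h q) n with hm
  have m_meas : ∀ n, Measurable (m n) := fun n => h_meas.min measurable_const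
  have m_ne_top : ∀ n q, m n q ≠ ∞ := fun n q =>
    ne_top_of_le_ne_top (ENNReal.natCast_ne_top n) (min_le_right _ _)
  set T : ℕ → ℝ≥0∞ := fun n => ∫⁻ q, m n q ^ α ∂Q with hT
  have key : ∀ n, T n ≤ E₁ * E₂ := by
    intro n
    have hφ_meas : Measurable fun q => m n q ^ (α - 1) := (m_meas n).pow_const _
    have hmα_meas : Measurable fun q => m n q ^ α := (m_meas n).pow_const _
    -- finiteness of T n
    have hT_top : T n ≠ ∞ := by
      have : T n ≤ (n : ℝ≥0∞) ^ α := by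
        calc T n ≤ ∫⁻ _, (n : ℝ≥0∞) ^ α ∂Q :=
              lintegral_mono fun q =>
                ENNReal.rpow_le_rpow (min_le_right _ _) hα0.le
          _ = (n : ℝ≥0∞) ^ α := by simp
      exact ne_top_of_le_ne_top
        (ENNReal.rpow_lt_top_of_nonneg hα0.le (ENNReal.natCast_ne_top n)).ne this
    -- fiberwise quantity
    set H : Y → ℝ≥0∞ := fun y => ∫⁻ z, m n (y, z) ^ α ∂(η y) with hH
    have H_meas : Measurable H := by
      exact Measurable.lintegral_kernel_prod_right
        (f := fun y z => m n (y, z) ^ α) hmα_meas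
    -- step 1: T n ≤ ∫ h * m^(α-1) dQ
    have c1 : T n ≤ ∫⁻ q, (h * fun q => m n q ^ (α - 1)) q ∂Q := by
      refine lintegral_mono fun q => ?_
      rcases eq_or_ne (m n q) 0 with h0 | h0
      · rw [h0, ENNReal.zero_rpow_of_pos hα0]; exact zero_le
      · have e : m n q ^ α = m n q * m n q ^ (α - 1) := by
          calc m n q ^ α = m n q ^ ((1:ℝ) + (α - 1)) := by congr 1; ring
            _ = m n q ^ (1:ℝ) * m n q ^ (α - 1) :=
                ENNReal.rpow_add _ _ h0 (m_ne_top n q)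
            _ = m n q * m n q ^ (α - 1) := by rw [ENNReal.rpow_one]
        calc m n q ^ α = m n q * m n q ^ (α - 1) := e
          _ ≤ h q * m n q ^ (α - 1) := mul_le_mul_left (min_le_left _ _) _
    -- step 2+3: ∫ h * m^(α-1) dQ = ∫∫ m^(α-1) dκ dμ
    have c2 : ∫⁻ q, (h * fun q => m n q ^ (α - 1)) q ∂Q
        = ∫⁻ y, ∫⁻ z, m n (y, z) ^ (α - 1) ∂(κ y) ∂μ := by
      rw [← lintegral_withDensity_eq_lintegral_mul Q h_meas hφ_meas, hPd, hP,
        Measure.lintegral_compProd hφ_meas]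
    -- step 4+5: fiberwise Hölder
    have c4 : ∀ y, ∫⁻ z, m n (y, z) ^ (α - 1) ∂(κ y) ≤ E₂ ^ (1 / α) * H y ^ (1 / pc) := by
      intro y
      rw [← hgd y, lintegral_withDensity_eq_lintegral_mul _ (g_meas y)
        (show Measurable fun z => m n (y, z) ^ (α - 1) from
          hφ_meas.comp measurable_prodMk_left)]
      calc ∫⁻ z, (g y * fun z => m n (y, z) ^ (α - 1)) z ∂(η y)
          ≤ (∫⁻ z, g y z ^ α ∂(η y)) ^ (1 / α)
            * (∫⁻ z, (m n (y, z) ^ (α - 1)) ^ pc ∂(η y)) ^ (1 / pc) :=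
            ENNReal.lintegral_mul_le_Lp_mul_Lq (η y) hc (g_meas y).aemeasurable
              ((hφ_meas.comp measurable_prodMk_left).aemeasurable)
        _ = (∫⁻ z, g y z ^ α ∂(η y)) ^ (1 / α) * H y ^ (1 / pc) := by
            congr 1
            congr 1
            refine lintegral_congr fun z => ?_
            rw [← ENNReal.rpow_mul, hc.sub_one_mul_conj]
        _ ≤ E₂ ^ (1 / α) * H y ^ (1 / pc) :=
            mul_le_mul_left
              (ENNReal.rpow_le_rpow (hB2 y) (one_div_nonneg.mpr hα0.le)) _
    -- step 6: integrate over μ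
    have c6 : T n ≤ E₂ ^ (1 / α) * ∫⁻ y, H y ^ (1 / pc) ∂μ := by
      calc T n ≤ ∫⁻ y, ∫⁻ z, m n (y, z) ^ (α - 1) ∂(κ y) ∂μ := c1.trans_eq c2
        _ ≤ ∫⁻ y, E₂ ^ (1 / α) * H y ^ (1 / pc) ∂μ := lintegral_mono c4
        _ = E₂ ^ (1 / α) * ∫⁻ y, H y ^ (1 / pc) ∂μ :=
            lintegral_const_mul _ (H_meas.pow_const _)
    -- step 7+8: outer Hölder
    have c7 : ∫⁻ y, H y ^ (1 / pc) ∂μ ≤ E₁ ^ (1 / α) * (T n) ^ (1 / pc) := by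
      have hq : ∫⁻ y, H y ^ (1 / pc) ∂μ = ∫⁻ y, (f * fun y => H y ^ (1 / pc)) y ∂ν := by
        rw [← lintegral_withDensity_eq_lintegral_mul ν f_meas (H_meas.pow_const _), hfd]
      rw [hq]
      calc ∫⁻ y, (f * fun y => H y ^ (1 / pc)) y ∂ν
          ≤ (∫⁻ y, f y ^ α ∂ν) ^ (1 / α) * (∫⁻ y, (H y ^ (1 / pc)) ^ pc ∂ν) ^ (1 / pc) :=
            ENNReal.lintegral_mul_le_Lp_mul_Lq ν hc f_meas.aemeasurable
              ((H_meas.pow_const _).aemeasurable)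
        _ = (∫⁻ y, f y ^ α ∂ν) ^ (1 / α) * (∫⁻ y, H y ∂ν) ^ (1 / pc) := by
            congr 1
            congr 1
            refine lintegral_congr fun y => ?_
            rw [← ENNReal.rpow_mul, one_div, inv_mul_cancel₀ hpc0, ENNReal.rpow_one]
        _ = (∫⁻ y, f y ^ α ∂ν) ^ (1 / α) * (T n) ^ (1 / pc) := by
            congr 1
            congr 1
            exact (Measure.lintegral_compProd hmα_meas).symm
        _ ≤ E₁ ^ (1 / α) * (T n) ^ (1 / pc) :=
            mul_le_mul_left
              (ENNReal.rpow_le_rpow hB1 (one_div_nonneg.mpr hα0.le)) _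
    -- combine
    have total : T n ≤ (E₂ ^ (1 / α) * E₁ ^ (1 / α)) * (T n) ^ (1 / pc) := by
      calc T n ≤ E₂ ^ (1 / α) * (E₁ ^ (1 / α) * (T n) ^ (1 / pc)) :=
            c6.trans (mul_le_mul_right c7 _)
        _ = (E₂ ^ (1 / α) * E₁ ^ (1 / α)) * (T n) ^ (1 / pc) := by ring
    rcases eq_or_ne (T n) 0 with h0 | h0
    · rw [h0]; exact zero_le
    have hsplit : T n = T n ^ (1 / α) * T n ^ (1 / pc) := by
      rw [← ENNReal.rpow_add _ _ h0 hT_top]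
      rw [show 1 / α + 1 / pc = 1 by
        rw [one_div, one_div]; exact hc.inv_add_inv_eq_inv.trans inv_one]
      exact (ENNReal.rpow_one _).symm
    have hTp0 : T n ^ (1 / pc) ≠ 0 := by
      simp [ENNReal.rpow_eq_zero_iff, h0, hT_top]
    have hTp_top : T n ^ (1 / pc) ≠ ∞ :=
      (ENNReal.rpow_lt_top_of_nonneg (one_div_nonneg.mpr hc.symm.pos.le) hT_top).ne
    have hroot : T n ^ (1 / α) ≤ E₂ ^ (1 / α) * E₁ ^ (1 / α) := by
      have total' : T n ^ (1 / α) * T n ^ (1 / pc)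
          ≤ (E₂ ^ (1 / α) * E₁ ^ (1 / α)) * T n ^ (1 / pc) := by
        rw [← hsplit]; exact total
      exact (ENNReal.mul_le_mul_iff_left hTp0 hTp_top).mp total'
    have hroot' : T n ^ (1 / α) ≤ (E₂ * E₁) ^ (1 / α) := by
      rw [ENNReal.mul_rpow_of_nonneg _ _ (one_div_nonneg.mpr hα0.le)]
      exact hroot
    have := ENNReal.rpow_le_rpow hroot' hα0.le
    rw [← ENNReal.rpow_mul, ← ENNReal.rpow_mul, one_div_mul_cancel hα0.ne',
      ENNReal.rpow_one, ENNReal.rpow_one] at this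
    calc T n ≤ E₂ * E₁ := this
      _ = E₁ * E₂ := mul_comm _ _
  -- take supremum over n
  have hmono : Monotone fun n q => m n q ^ α := by
    intro a b hab q
    exact ENNReal.rpow_le_rpow (min_le_min le_rfl (Nat.cast_le.mpr hab)) hα0.le
  have hfin : ∀ᵐ q ∂Q, h q < ∞ := Measure.rnDeriv_lt_top P Q
  have hsup : ∀ᵐ q ∂Q, h q ^ α = ⨆ n, m n q ^ α := by
    filter_upwards [hfin] with q hq
    obtain ⟨n₀, hn₀⟩ := ENNReal.exists_nat_gt hq.ne
    refine le_antisymm ?_ (iSup_le fun n =>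
      ENNReal.rpow_le_rpow (min_le_left _ _) hα0.le)
    have : m n₀ q = h q := min_eq_left hn₀.le
    calc h q ^ α = m n₀ q ^ α := by rw [this]
      _ ≤ ⨆ n, m n q ^ α := le_iSup (fun n => m n q ^ α) n₀
  calc ∫⁻ q, h q ^ α ∂Q = ∫⁻ q, ⨆ n, m n q ^ α ∂Q := lintegral_congr_ae hsup
    _ = ⨆ n, T n := lintegral_iSup (fun n => (m_meas n).pow_const _) hmono
    _ ≤ E₁ * E₂ := iSup_le key
    _ = ENNReal.ofReal (Real.exp ((α - 1) * (ε₁ + ε₂))) := by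
        rw [hE₁, hE₂, ← ENNReal.ofReal_mul (Real.exp_nonneg _), ← Real.exp_add, ← mul_add]
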